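/- Exact sequence for M_{E,Ṡ_E,N} (abstract form): with Γ a finite group, S̄ a finite set (of 'places'), stabilizer subgroups Γ_{v̄} ≤ Γ for each v̄ ∈ S̄ satisfying: for every pair θ₁, θ₂ ∈ Γ there exists v̄₀ ∈ S̄ with θ₂⁻¹θ₁ ∈ Γ_{v̄₀} — then the sequence 0 → M_φ → Maps(S̄, Maps(Γ, (1/N)Z/Z))₀ → Maps(⊔_{v̄} Γ/Γ_{v̄}, (1/N)Z/Z)₀ → 0 is exact, where: M_φ is the group of φ: S̄ × Γ → (1/N)Z/Z with Σ_{σ∈Γ_{v̄}} φ(v̄, θσ) = 0 and Σ_{v̄} φ(v̄,θ) = 0; the middle group consists of φ with only the condition Σ_{v̄} φ(v̄,θ) = 0; the map to the third group sends φ to ξ with ξ(θΓ_{v̄}) = Σ_{σ∈Γ_{v̄}} φ(v̄, θσ); the subscript 0 on the third group means total sum of values zero. In particular, the third map is well-defined, lands in the sum-zero subgroup, and is surjective. -/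
import Mathlib
set_option linter.unusedSectionVars false

variable {Γ : Type} [Group Γ] [Fintype Γ] [DecidableEq Γ]
variable {M : Type} [AddCommMonoid M]

lemma stmt16_aux_L1 (H : Subgroup Γ) [DecidablePred (· ∈ H)] (f : Γ → M)
    {θ θ' : Γ} (h : θ⁻¹ * θ' ∈ H) :
    ∑ σ ∈ Finset.univ.filter (· ∈ H), f (θ * σ)
      = ∑ σ ∈ Finset.univ.filter (· ∈ H), f (θ' * σ) := by
  refine Finset.sum_nbij' (fun σ => θ'⁻¹ * θ * σ) (fun τ => θ⁻¹ * θ' * τ) ?_ ?_ ?_ ?_ ?_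
  · intro a ha
    simp only [Finset.mem_filter, Finset.mem_univ, true_and] at *
    have : θ'⁻¹ * θ ∈ H := by
      have := H.inv_mem h; simpa [mul_inv_rev] using this
    exact H.mul_mem this ha
  · intro a ha
    simp only [Finset.mem_filter, Finset.mem_univ, true_and] at *
    exact H.mul_mem h ha
  · intro a _; group
  · intro a _; group
  · intro a _; congr 1; group

noncomputable def stmt16_aux_equiv (H : Subgroup Γ) : (Γ ⧸ H) × H ≃ Γ where
  toFun := fun p => Quotient.out p.1 * (p.2 : Γ)
  invFun := fun θ => ⟨QuotientGroup.mk θ,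
    ⟨(Quotient.out (QuotientGroup.mk θ : Γ ⧸ H))⁻¹ * θ, by
      rw [← QuotientGroup.eq, QuotientGroup.out_eq']⟩⟩
  left_inv := by
    rintro ⟨c, h, hh⟩
    have hmk : (QuotientGroup.mk (Quotient.out c * h) : Γ ⧸ H) = c := by
      rw [QuotientGroup.mk_mul_of_mem _ hh, QuotientGroup.out_eq']
    ext
    · simp [hmk]
    · simp [hmk]
  right_inv := by intro θ; simp

lemma stmt16_aux_L2 (H : Subgroup Γ) [DecidablePred (· ∈ H)] (f : Γ → M) :
    ∑ c : Γ ⧸ H, ∑ σ ∈ Finset.univ.filter (· ∈ H), f (Quotient.out c * σ)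
      = ∑ θ : Γ, f θ := by
  rw [← Equiv.sum_comp (stmt16_aux_equiv H) f, Fintype.sum_prod_type]
  refine Finset.sum_congr rfl fun c _ => ?_
  rw [Finset.sum_subtype (p := (· ∈ H)) (Finset.univ.filter (· ∈ H)) (by simp)
    (fun σ => f (Quotient.out c * σ))]
  rfl

lemma stmt16_aux_L3 (H : Subgroup Γ) [DecidablePred (· ∈ H)] (θ a : Γ) (v : M) :
    ∑ σ ∈ Finset.univ.filter (· ∈ H), (if θ * σ = a then v else 0)
      = if θ⁻¹ * a ∈ H then v else 0 := by
  simp_rw [show ∀ σ : Γ, (θ * σ = a) = (σ = θ⁻¹ * a) from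
    fun σ => propext (eq_inv_mul_iff_mul_eq).symm]
  rw [Finset.sum_ite_eq' (Finset.univ.filter (· ∈ H)) (θ⁻¹ * a) (fun _ => v)]
  simp

/-- Lemma lem:mesn_phiseq: the sequence
`0 → M_φ → Maps(S̄, Maps(Γ,(1/N)ℤ/ℤ))₀ → Maps(⊔_{v̄} Γ/Γ_{v̄}, (1/N)ℤ/ℤ)₀ → 0`
is exact: the map `φ ↦ ξ`, `ξ(θΓ_{v̄}) = Σ_{σ∈Γ_{v̄}} φ(v̄, θσ)`, is well defined on
cosets, lands in the sum-zero subgroup, and is surjective (its kernel being `M_φ` by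
definition). -/
theorem stmt16
    (Γ Sbar : Type) [Group Γ] [Fintype Γ] [DecidableEq Γ] [Fintype Sbar]
    (Gv : Sbar → Subgroup Γ) [∀ q, DecidablePred (· ∈ Gv q)]
    (N : ℕ)
    (hcov : ∀ θ₁ θ₂ : Γ, ∃ q : Sbar, θ₂⁻¹ * θ₁ ∈ Gv q) :
    -- (i) the map is well defined on cosets
    (∀ φ : Sbar × Γ → ZMod N,
      (∀ θ : Γ, ∑ q : Sbar, φ (q, θ) = 0) →
      ∀ (q : Sbar) (θ θ' : Γ), θ⁻¹ * θ' ∈ Gv q →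
        ∑ σ ∈ Finset.univ.filter (· ∈ Gv q), φ (q, θ * σ)
          = ∑ σ ∈ Finset.univ.filter (· ∈ Gv q), φ (q, θ' * σ)) ∧
    -- (ii) the image has total sum zero over the disjoint union of coset spaces
    (∀ φ : Sbar × Γ → ZMod N,
      (∀ θ : Γ, ∑ q : Sbar, φ (q, θ) = 0) →
      ∑ x : (q : Sbar) × (Γ ⧸ Gv q),
        ∑ σ ∈ Finset.univ.filter (· ∈ Gv x.1), φ (x.1, (Quotient.out x.2) * σ) = 0) ∧
    -- (iii) surjectivity onto the sum-zero functions on the disjoint union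
    (∀ ξ : ((q : Sbar) × (Γ ⧸ Gv q)) → ZMod N,
      (∑ x : (q : Sbar) × (Γ ⧸ Gv q), ξ x = 0) →
      ∃ φ : Sbar × Γ → ZMod N,
        (∀ θ : Γ, ∑ q : Sbar, φ (q, θ) = 0) ∧
        ∀ (q : Sbar) (θ : Γ),
          ∑ σ ∈ Finset.univ.filter (· ∈ Gv q), φ (q, θ * σ)
            = ξ ⟨q, QuotientGroup.mk θ⟩) := by
  classical
  refine ⟨?_, ?_, ?_⟩
  · intro φ _ q θ θ' h
    exact stmt16_aux_L1 (Gv q) (fun x => φ (q, x)) h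
  · intro φ hφ
    rw [← Finset.univ_sigma_univ, Finset.sum_sigma]
    calc ∑ q : Sbar, ∑ c : Γ ⧸ Gv q,
          ∑ σ ∈ Finset.univ.filter (· ∈ Gv q), φ (q, Quotient.out c * σ)
        = ∑ q : Sbar, ∑ θ : Γ, φ (q, θ) :=
          Finset.sum_congr rfl fun q _ => stmt16_aux_L2 (Gv q) (fun x => φ (q, x))
      _ = ∑ θ : Γ, ∑ q : Sbar, φ (q, θ) := Finset.sum_comm
      _ = 0 := by simp [hφ]
  · intro ξ hξ
    choose g hg using fun θ => hcov θ 1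
    have hg' : ∀ θ : Γ, θ ∈ Gv (g θ) := fun θ => by simpa using hg θ
    set f : Sbar × Γ → ZMod N := fun p =>
      if p.2 = Quotient.out (QuotientGroup.mk p.2 : Γ ⧸ Gv p.1)
        then ξ ⟨p.1, QuotientGroup.mk p.2⟩ else 0 with hf
    set c : Γ → ZMod N := fun θ => ∑ q : Sbar, f (q, θ) with hc
    set d : Sbar → ZMod N := fun q => ∑ x : Γ, if g x = q then c x else 0 with hd
    set ψ : Sbar × Γ → ZMod N := fun p =>
      (if g p.2 = p.1 then c p.2 else 0) - (if p.2 = 1 then d p.1 else 0) with hψ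
    have F1 : ∀ (q : Sbar) (θ : Γ),
        ∑ σ ∈ Finset.univ.filter (· ∈ Gv q), f (q, θ * σ)
          = ξ ⟨q, QuotientGroup.mk θ⟩ := by
      intro q θ
      have step : ∀ σ ∈ Finset.univ.filter (· ∈ Gv q),
          f (q, θ * σ) = if θ * σ = Quotient.out (QuotientGroup.mk θ : Γ ⧸ Gv q)
            then ξ ⟨q, QuotientGroup.mk θ⟩ else 0 := by
        intro σ hσ
        simp only [Finset.mem_filter, Finset.mem_univ, true_and] at hσ
        have hmk : (QuotientGroup.mk (θ * σ) : Γ ⧸ Gv q) = QuotientGroup.mk θ :=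
          QuotientGroup.mk_mul_of_mem θ hσ
        simp only [hf, hmk]
      rw [Finset.sum_congr rfl step, stmt16_aux_L3, if_pos]
      exact QuotientGroup.eq.mp (QuotientGroup.out_eq' _).symm
    have Fc0 : ∑ θ : Γ, c θ = 0 := by
      have h1 : ∑ θ : Γ, c θ = ∑ q : Sbar, ∑ θ : Γ, f (q, θ) := by
        rw [hc]; exact Finset.sum_comm
      have h2 : ∀ q : Sbar, ∑ θ : Γ, f (q, θ) = ∑ x : Γ ⧸ Gv q, ξ ⟨q, x⟩ := by
        intro q
        rw [← stmt16_aux_L2 (Gv q) (fun x => f (q, x))]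
        refine Finset.sum_congr rfl fun x _ => ?_
        have := F1 q (Quotient.out x)
        rwa [QuotientGroup.out_eq'] at this
      rw [h1, Finset.sum_congr rfl fun q _ => h2 q, ← Finset.sum_sigma, Finset.univ_sigma_univ]
      exact hξ
    have Fd0 : ∑ q : Sbar, d q = 0 := by
      rw [hd]
      rw [Finset.sum_comm]
      calc ∑ x : Γ, ∑ q : Sbar, (if g x = q then c x else 0)
          = ∑ x : Γ, c x := by
            refine Finset.sum_congr rfl fun x _ => ?_
            simp [Finset.sum_ite_eq]
        _ = 0 := Fc0
    have Fψcol : ∀ θ : Γ, ∑ q : Sbar, ψ (q, θ) = c θ := by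
      intro θ
      simp only [hψ]
      rw [Finset.sum_sub_distrib]
      have h1 : ∑ q : Sbar, (if g θ = q then c θ else 0) = c θ := by
        simp [Finset.sum_ite_eq]
      have h2 : ∑ q : Sbar, (if θ = 1 then d q else 0) = 0 := by
        by_cases h : θ = 1 <;> simp [h, Fd0]
      rw [h1, h2, sub_zero]
    have Fψcoset : ∀ (q : Sbar) (θ : Γ),
        ∑ σ ∈ Finset.univ.filter (· ∈ Gv q), ψ (q, θ * σ) = 0 := by
      intro q θ
      simp only [hψ]
      rw [Finset.sum_sub_distrib]
      have hB : ∑ σ ∈ Finset.univ.filter (· ∈ Gv q), (if θ * σ = 1 then d q else 0)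
          = if θ⁻¹ ∈ Gv q then d q else 0 := by
        simpa using stmt16_aux_L3 (Gv q) θ 1 (d q)
      by_cases h : θ ∈ Gv q
      · have hA : ∑ σ ∈ Finset.univ.filter (· ∈ Gv q),
            (if g (θ * σ) = q then c (θ * σ) else 0) = d q := by
          have ht : θ⁻¹ * 1 ∈ Gv q := by simpa using (Gv q).inv_mem h
          rw [stmt16_aux_L1 (Gv q) (fun x => if g x = q then c x else 0) ht]
          simp only [one_mul]
          rw [hd]
          refine Finset.sum_subset (Finset.subset_univ _) ?_
          intro x _ hx
          simp only [Finset.mem_filter, Finset.mem_univ, true_and] at hx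
          rw [if_neg]
          exact fun hgx => hx (hgx ▸ hg' x)
        rw [hA, hB, if_pos ((Gv q).inv_mem h), sub_self]
      · have hA : ∑ σ ∈ Finset.univ.filter (· ∈ Gv q),
            (if g (θ * σ) = q then c (θ * σ) else 0) = 0 := by
          refine Finset.sum_eq_zero ?_
          intro σ hσ
          simp only [Finset.mem_filter, Finset.mem_univ, true_and] at hσ
          rw [if_neg]
          intro hgx
          have hm : θ * σ ∈ Gv q := hgx ▸ hg' (θ * σ)
          exact h (by simpa using (Gv q).mul_mem hm ((Gv q).inv_mem hσ))
        rw [hA, hB, if_neg (fun hinv => h (by simpa using (Gv q).inv_mem hinv)), sub_zero]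
    refine ⟨fun p => f p - ψ p, ?_, ?_⟩
    · intro θ
      rw [Finset.sum_sub_distrib, Fψcol θ]
      simp [hc]
    · intro q θ
      rw [Finset.sum_sub_distrib, F1, Fψcoset, sub_zero]
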